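/- arXiv:1907.00113 — 4 statements merged into one kernel-verified Lean document; each statement's English description precedes it below -/
import Mathlib

section
/- Let u, v be two probability vectors in R^p (entries nonnegative, summing to 1). Suppose there exist constants α, β > 0 such that for every j, u_j ∈ {0} ∪ [α/p, β/p] and v_j ∈ [α/p, β/p]. Then the Kullback–Leibler divergence D_KL(u,v) = Σ_{j: u_j ≠ 0} u_j log(u_j/v_j) satisfies D_KL(u,v) ≥ (p α / (2 β²)) · ‖u − v‖₂². -/
open scoped Classical

private lemma kl_key (M v u : ℝ) (hv : 0 < v) (hu : 0 < u) (huM : u ≤ M)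
    (hvM : v ≤ M) :
    (u - v) ^ 2 / (2 * M) ≤ u * Real.log (u / v) - (u - v) := by
  have hM : 0 < M := lt_of_lt_of_le hv hvM
  set f : ℝ → ℝ := fun x => x * (Real.log x - Real.log v) - (x - v)
      - (x - v) ^ 2 / (2 * M) with hf
  have hderiv : ∀ x : ℝ, 0 < x →
      HasDerivAt f (Real.log x - Real.log v - (x - v) / M) x := by
    intro x hx
    have h1 : HasDerivAt (fun x : ℝ => x * (Real.log x - Real.log v))
        (1 * (Real.log x - Real.log v) + x * x⁻¹) x :=
      (hasDerivAt_id x).mul ((Real.hasDerivAt_log hx.ne').sub_const _)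
    have h2 : HasDerivAt (fun x : ℝ => x - v) 1 x := (hasDerivAt_id x).sub_const v
    have h3 : HasDerivAt (fun x : ℝ => (x - v) ^ 2 / (2 * M))
        ((2 * (x - v) ^ 1 * 1) / (2 * M)) x := (h2.pow 2).div_const _
    have := (h1.sub h2).sub h3
    refine this.congr_deriv ?_
    rw [mul_inv_cancel₀ hx.ne']
    ring
  have hfv : f v = 0 := by simp [hf]
  have hlog : Real.log (u / v) = Real.log u - Real.log v :=
    Real.log_div hu.ne' hv.ne'
  have hcont : ∀ s : Set ℝ, s ⊆ Set.Ioi (0:ℝ) → ContinuousOn f s := by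
    intro s hs
    intro x hx
    exact (hderiv x (hs hx)).continuousAt.continuousWithinAt
  rcases lt_trichotomy u v with h | h | h
  · -- u < v : f antitone on [u, v]
    have hanti : AntitoneOn f (Set.Icc u v) := by
      apply antitoneOn_of_deriv_nonpos (convex_Icc u v)
      · exact hcont _ (fun x hx => lt_of_lt_of_le hu hx.1)
      · intro x hx
        rw [interior_Icc] at hx
        exact ((hderiv x (hu.trans hx.1)).differentiableAt).differentiableWithinAt
      · intro x hx
        rw [interior_Icc] at hx
        have hx0 : 0 < x := hu.trans hx.1
        rw [(hderiv x hx0).deriv]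
        have hl : Real.log x - Real.log v ≤ x / v - 1 := by
          have := Real.log_le_sub_one_of_pos (div_pos hx0 hv)
          rwa [Real.log_div hx0.ne' hv.ne'] at this
        have h2 : x / v - 1 = (x - v) / v := by field_simp
        have h3 : (x - v) / v ≤ (x - v) / M := by
          rw [div_le_div_iff₀ hv hM]
          nlinarith [hx.2]
        nlinarith
    have := hanti (Set.left_mem_Icc.2 h.le) (Set.right_mem_Icc.2 h.le) h.le
    rw [hfv] at this
    simp only [hf] at this
    rw [hlog]; linarith
  · subst h; simp [div_self hu.ne']
  · -- v < u : f monotone on [v, u]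
    have hmono : MonotoneOn f (Set.Icc v u) := by
      apply monotoneOn_of_deriv_nonneg (convex_Icc v u)
      · exact hcont _ (fun x hx => lt_of_lt_of_le hv hx.1)
      · intro x hx
        rw [interior_Icc] at hx
        exact ((hderiv x (hv.trans hx.1)).differentiableAt).differentiableWithinAt
      · intro x hx
        rw [interior_Icc] at hx
        have hx0 : 0 < x := hv.trans hx.1
        rw [(hderiv x hx0).deriv]
        have hl : 1 - v / x ≤ Real.log x - Real.log v := by
          have := Real.log_le_sub_one_of_pos (div_pos hv hx0)
          rw [Real.log_div hv.ne' hx0.ne'] at this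
          linarith
        have h2 : 1 - v / x = (x - v) / x := by field_simp
        have h3 : (x - v) / M ≤ (x - v) / x := by
          rw [div_le_div_iff₀ hM hx0]
          nlinarith [hx.2, hx.1]
        nlinarith
    have := hmono (Set.left_mem_Icc.2 h.le) (Set.right_mem_Icc.2 h.le) h.le
    rw [hfv] at this
    simp only [hf] at this
    rw [hlog]; linarith

/-- KL divergence lower bound by squared ℓ₂ distance for two
probability vectors with entries in {0} ∪ [α/p, β/p] (resp. [α/p, β/p]). -/
theorem kl_ge_l2 (p : ℕ) (hp : 0 < p) (u v : Fin p → ℝ) (α β : ℝ)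
    (hα : 0 < α) (hβ : 0 < β)
    (hu0 : ∀ j, 0 ≤ u j) (hu1 : ∑ j, u j = 1)
    (hv0 : ∀ j, 0 ≤ v j) (hv1 : ∑ j, v j = 1)
    (hu : ∀ j, u j = 0 ∨ (α / p ≤ u j ∧ u j ≤ β / p))
    (hv : ∀ j, α / p ≤ v j ∧ v j ≤ β / p) :
    (p * α / (2 * β ^ 2)) * ∑ j, (u j - v j) ^ 2 ≤
      ∑ j, (if u j ≠ 0 then u j * Real.log (u j / v j) else 0) := by
  have hp' : (0:ℝ) < p := by exact_mod_cast hp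
  set M : ℝ := β / p with hMdef
  have hM : 0 < M := div_pos hβ hp'
  have hαβ : α ≤ β := by
    have h0 := hv ⟨0, hp⟩
    have := h0.1.trans h0.2
    calc α = (α / p) * p := by field_simp
    _ ≤ (β / p) * p := by nlinarith
    _ = β := by field_simp
  set C : ℝ := p * α / (2 * β ^ 2) with hC
  have hCM : C ≤ 1 / (2 * M) := by
    rw [hC, hMdef]
    rw [div_le_div_iff₀ (by positivity) (by positivity)]
    have : (0:ℝ) < β := hβ
    calc p * α * (2 * (β / p)) = 2 * α * β := by field_simp
    _ ≤ 2 * β * β := by nlinarith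
    _ = 1 * (2 * β ^ 2) := by ring
  have hkey : ∀ j, (u j - v j) + C * (u j - v j) ^ 2 ≤
      (if u j ≠ 0 then u j * Real.log (u j / v j) else 0) := by
    intro j
    have hvj := hv j
    have hvj0 : 0 < v j := lt_of_lt_of_le (by positivity) hvj.1
    have hvM : v j ≤ M := hvj.2
    have hsq : C * (u j - v j) ^ 2 ≤ (u j - v j) ^ 2 / (2 * M) := by
      rw [div_eq_mul_inv, ← one_div, mul_comm ((u j - v j)^2) _]
      exact mul_le_mul_of_nonneg_right hCM (sq_nonneg _)
    rcases hu j with h0 | ⟨hl, hr⟩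
    · rw [if_neg (by simp [h0])]
      rw [h0] at hsq ⊢
      have : (0 - v j) ^ 2 / (2 * M) ≤ v j := by
        rw [div_le_iff₀ (by positivity)]
        nlinarith
      linarith
    · have huj0 : 0 < u j := lt_of_lt_of_le (by positivity) hl
      rw [if_pos huj0.ne']
      have := kl_key M (v j) (u j) hvj0 huj0 hr hvM
      linarith
  calc C * ∑ j, (u j - v j) ^ 2
      = ∑ j, ((u j - v j) + C * (u j - v j) ^ 2) := by
        rw [Finset.sum_add_distrib, Finset.sum_sub_distrib, hu1, hv1,
          Finset.mul_sum]
        ring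
    _ ≤ _ := Finset.sum_le_sum (fun j _ => hkey j)
end

section
/- Let P, Q ∈ R^{p×p} be row-stochastic matrices and π ∈ R^p a probability vector with π_min := min_j π_j > 0. Suppose there exist α, β > 0 such that all entries P_{ij} ∈ {0} ∪ [α/p, β/p] and Q_{ij} ∈ [α/p, β/p]. Then ‖P − Q‖_F² ≤ (2β²/(α π_min p)) · D_KL(P,Q), where D_KL(P,Q) := Σ_{i,j} π_i P_{ij} log(P_{ij}/Q_{ij}) 1_{P_{ij} ≠ 0}. -/
open scoped Classical

private noncomputable def gfun (y c : ℝ) : ℝ → ℝ :=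
  fun t => t * Real.log t - t * Real.log y - t + y - (t - y) ^ 2 / (2 * c)

private lemma gfun_deriv (y c : ℝ) (hc : 0 < c) {t : ℝ} (ht : 0 < t) :
    HasDerivAt (gfun y c) (Real.log t - Real.log y - (t - y) / c) t := by
  have h1 : HasDerivAt (fun t : ℝ => t * Real.log t) (Real.log t + 1) t :=
    Real.hasDerivAt_mul_log ht.ne'
  have h2 : HasDerivAt (fun t : ℝ => t * Real.log y) (Real.log y) t := by
    simpa using (hasDerivAt_id t).mul_const (Real.log y)
  have h3 : HasDerivAt (fun t : ℝ => (t - y) ^ 2 / (2 * c))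
      (2 * (t - y) / (2 * c)) t := by
    have : HasDerivAt (fun t : ℝ => (t - y) ^ 2) (2 * (t - y)) t := by
      simpa using ((hasDerivAt_id t).sub_const y).fun_pow 2
    simpa using this.div_const (2 * c)
  have := (((h1.sub h2).sub (hasDerivAt_id t)).add_const y).sub h3
  refine HasDerivAt.congr_deriv (f := gfun y c) this ?_
  ring

private lemma gfun_cont (y c : ℝ) : ContinuousOn (gfun y c) (Set.Ici (0:ℝ) \ {0}) := by
  apply ContinuousOn.sub
  apply ContinuousOn.add
  apply ContinuousOn.sub
  apply ContinuousOn.sub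
  · exact (continuousOn_id.mul (Real.continuousOn_log.mono (by intro x hx; exact hx.2)))
  · exact continuousOn_id.mul continuousOn_const
  · exact continuousOn_id
  · exact continuousOn_const
  · exact ((continuousOn_id.sub continuousOn_const).pow 2).div_const _

lemma key_ineq {c x y : ℝ} (hc : 0 < c) (hx : 0 < x) (hxc : x ≤ c)
    (hy : 0 < y) (hyc : y ≤ c) :
    (x - y) ^ 2 / (2 * c) ≤ x * Real.log (x / y) - x + y := by
  have hgy : gfun y c y = 0 := by simp [gfun]
  have hcont : ContinuousOn (gfun y c) (Set.Icc (min x y) (max x y)) := by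
    apply (gfun_cont y c).mono
    intro t ht
    have h1 : min x y ≤ t := ht.1
    have hmin : 0 < min x y := lt_min hx hy
    constructor
    · exact le_of_lt (lt_of_lt_of_le hmin h1)
    · simp only [Set.mem_singleton_iff]
      exact (lt_of_lt_of_le hmin h1).ne'
  have key : 0 ≤ gfun y c x := by
    rcases le_total y x with hle | hle
    · have hmono : MonotoneOn (gfun y c) (Set.Icc y x) := by
        apply monotoneOn_of_deriv_nonneg (convex_Icc y x)
        · simpa [min_eq_right hle, max_eq_left hle] using hcont
        · intro t ht
          rw [interior_Icc] at ht
          exact (gfun_deriv y c hc (hy.trans ht.1)).differentiableAt.differentiableWithinAt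
        · intro t ht
          rw [interior_Icc] at ht
          have ht0 : 0 < t := hy.trans ht.1
          rw [(gfun_deriv y c hc ht0).deriv]
          have hlog : Real.log y - Real.log t ≤ y / t - 1 := by
            have := Real.log_le_sub_one_of_pos (div_pos hy ht0)
            rwa [Real.log_div hy.ne' ht0.ne'] at this
          have h2 : (t - y) / c ≤ (t - y) / t :=
            div_le_div_of_nonneg_left (by linarith [ht.1] : (0:ℝ) ≤ t - y) ht0
              (le_trans ht.2.le hxc)
          have h3 : y / t - 1 = -((t - y) / t) := by field_simp; ring
          linarith [h2, hlog, h3]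
      have := hmono (Set.left_mem_Icc.2 hle) (Set.right_mem_Icc.2 hle) hle
      rwa [hgy] at this
    · have hanti : AntitoneOn (gfun y c) (Set.Icc x y) := by
        apply antitoneOn_of_deriv_nonpos (convex_Icc x y)
        · simpa [min_eq_left hle, max_eq_right hle] using hcont
        · intro t ht
          rw [interior_Icc] at ht
          exact (gfun_deriv y c hc (hx.trans ht.1)).differentiableAt.differentiableWithinAt
        · intro t ht
          rw [interior_Icc] at ht
          have ht0 : 0 < t := hx.trans ht.1
          rw [(gfun_deriv y c hc ht0).deriv]
          have hlog : Real.log t - Real.log y ≤ t / y - 1 := by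
            have := Real.log_le_sub_one_of_pos (div_pos ht0 hy)
            rwa [Real.log_div ht0.ne' hy.ne'] at this
          have h2 : (y - t) / c ≤ (y - t) / y :=
            div_le_div_of_nonneg_left (by linarith [ht.2] : (0:ℝ) ≤ y - t) hy hyc
          have h3 : t / y - 1 = -((y - t) / y) := by field_simp; ring
          have h4 : (t - y) / c = -((y - t) / c) := by ring
          linarith [h2, hlog, h3, h4]
      have := hanti (Set.left_mem_Icc.2 hle) (Set.right_mem_Icc.2 hle) hle
      rwa [hgy] at this
  have hlogdiv : Real.log (x / y) = Real.log x - Real.log y :=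
    Real.log_div hx.ne' hy.ne'
  simp only [gfun] at key
  nlinarith [key]

/-- Frobenius error bounded by KL divergence between Markov kernels. -/
theorem frob_le_kl (p : ℕ) (hp : 0 < p) (P Q : Matrix (Fin p) (Fin p) ℝ)
    (pi : Fin p → ℝ) (pimin α β : ℝ)
    (hpi0 : ∀ j, 0 ≤ pi j) (hpi1 : ∑ j, pi j = 1)
    (hpimin : IsLeast (Set.range pi) pimin) (hpiminpos : 0 < pimin)
    (hα : 0 < α) (hβ : 0 < β)
    (hProw : ∀ i, ∑ j, P i j = 1) (hQrow : ∀ i, ∑ j, Q i j = 1)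
    (hP : ∀ i j, P i j = 0 ∨ (α / p ≤ P i j ∧ P i j ≤ β / p))
    (hQ : ∀ i j, α / p ≤ Q i j ∧ Q i j ≤ β / p) :
    ∑ i, ∑ j, (P i j - Q i j) ^ 2 ≤
      (2 * β ^ 2 / (α * pimin * p)) *
        ∑ i, ∑ j, (if P i j ≠ 0 then pi i * P i j * Real.log (P i j / Q i j) else 0) := by
  have hp' : (0:ℝ) < p := by exact_mod_cast hp
  set c : ℝ := β / p with hcdef
  have hc : 0 < c := div_pos hβ hp'
  have hαp : 0 < α / p := div_pos hα hp'
  set R : Fin p → ℝ :=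
    fun i => ∑ j, (if P i j ≠ 0 then P i j * Real.log (P i j / Q i j) else 0) with hRdef
  -- per-entry inequality
  have hentry : ∀ i j, (P i j - Q i j) ^ 2 / (2 * c) ≤
      (if P i j ≠ 0 then P i j * Real.log (P i j / Q i j) else 0) - P i j + Q i j := by
    intro i j
    have hQl := (hQ i j).1
    have hQu := (hQ i j).2
    have hQ0 : 0 < Q i j := lt_of_lt_of_le hαp hQl
    rcases hP i j with h0 | ⟨hl, hu⟩
    · rw [h0]
      simp only [ne_eq, not_true_eq_false, if_false]
      have : (0 - Q i j) ^ 2 = Q i j * Q i j := by ring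
      rw [this]
      rw [div_le_iff₀ (by positivity)]
      nlinarith [hQ0, hQu, hc]
    · have hP0 : 0 < P i j := lt_of_lt_of_le hαp hl
      rw [if_pos hP0.ne']
      exact key_ineq hc hP0 hu hQ0 hQu
  -- row sums
  have hrow : ∀ i, ∑ j, (P i j - Q i j) ^ 2 / (2 * c) ≤ R i := by
    intro i
    calc ∑ j, (P i j - Q i j) ^ 2 / (2 * c)
        ≤ ∑ j, ((if P i j ≠ 0 then P i j * Real.log (P i j / Q i j) else 0) - P i j + Q i j) :=
          Finset.sum_le_sum fun j _ => hentry i j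
      _ = R i - (∑ j, P i j) + (∑ j, Q i j) := by
          rw [Finset.sum_add_distrib, Finset.sum_sub_distrib]
      _ = R i := by rw [hProw i, hQrow i]; ring
  have hRnn : ∀ i, 0 ≤ R i := fun i =>
    le_trans (Finset.sum_nonneg fun j _ => by positivity) (hrow i)
  have hsq : ∀ i, ∑ j, (P i j - Q i j) ^ 2 ≤ (2 * c) * R i := by
    intro i
    have h := hrow i
    rw [← Finset.sum_div, div_le_iff₀ (by positivity)] at h
    linarith [h]
  have hS : ∑ i, ∑ j, (P i j - Q i j) ^ 2 ≤ (2 * c) * ∑ i, R i := by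
    rw [Finset.mul_sum]
    exact Finset.sum_le_sum fun i _ => hsq i
  -- KL sum
  have hKinner : ∀ i,
      (∑ j, (if P i j ≠ 0 then pi i * P i j * Real.log (P i j / Q i j) else 0)) = pi i * R i := by
    intro i
    rw [hRdef, Finset.mul_sum]
    refine Finset.sum_congr rfl fun j _ => ?_
    split_ifs <;> ring
  set K : ℝ :=
    ∑ i, ∑ j, (if P i j ≠ 0 then pi i * P i j * Real.log (P i j / Q i j) else 0) with hKdef
  have hKR : K = ∑ i, pi i * R i := Finset.sum_congr rfl fun i _ => hKinner i
  have hminle : ∀ i, pimin ≤ pi i := fun i => hpimin.2 (Set.mem_range_self i)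
  have hK : pimin * ∑ i, R i ≤ K := by
    rw [hKR, Finset.mul_sum]
    exact Finset.sum_le_sum fun i _ =>
      mul_le_mul_of_nonneg_right (hminle i) (hRnn i)
  have hKnn : 0 ≤ K :=
    le_trans (mul_nonneg hpiminpos.le (Finset.sum_nonneg fun i _ => hRnn i)) hK
  have hsumR : ∑ i, R i ≤ K / pimin := by
    rw [le_div_iff₀ hpiminpos]
    linarith [hK]
  have hαβ : α ≤ β := by
    have h := le_trans (hQ ⟨0, hp⟩ ⟨0, hp⟩).1 (hQ ⟨0, hp⟩ ⟨0, hp⟩).2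
    rw [div_le_div_iff₀ hp' hp'] at h
    nlinarith [h]
  have hcoef : 2 * c / pimin ≤ 2 * β ^ 2 / (α * pimin * p) := by
    rw [hcdef]
    rw [div_le_div_iff₀ (by positivity) (by positivity)]
    have h1 : 2 * (β / p) * (α * pimin * p) = 2 * β * α * pimin := by
      field_simp
    rw [h1]
    nlinarith [mul_le_mul_of_nonneg_right (mul_le_mul_of_nonneg_left hαβ hβ.le) hpiminpos.le]
  calc ∑ i, ∑ j, (P i j - Q i j) ^ 2
      ≤ (2 * c) * ∑ i, R i := hS
    _ ≤ (2 * c) * (K / pimin) := mul_le_mul_of_nonneg_left hsumR (by positivity)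
    _ = (2 * c / pimin) * K := by ring
    _ ≤ (2 * β ^ 2 / (α * pimin * p)) * K := mul_le_mul_of_nonneg_right hcoef hKnn
end

section
/- Let g : X → R be continuously differentiable with majorization g(x) ≤ ĝ(x; x′) := g(x′) + ⟨∇g(x′), x − x′⟩ + (1/2)‖x − x′‖²_G for a self-adjoint positive semidefinite operator G, let p, q be proper closed convex functions, and θ = g + p − q. Let T be a self-adjoint linear operator, and let the iterates satisfy x^{k+1} ∈ argmin_x { ĝ(x; x^k) + p(x) − q(x^k) − ⟨x − x^k, ξ^k⟩ + (1/2)‖x − x^k‖²_T } with ξ^k ∈ ∂q(x^k). Then θ(x^{k+1}) ≤ θ(x^k) − (1/2)‖x^{k+1} − x^k‖²_{G + 2T}. -/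
open scoped RealInnerProductSpace

/-- sufficient-decrease property of the majorized
indefinite-proximal DC step: `θ(x^{k+1}) ≤ θ(x^k) − (1/2)‖x^{k+1} − x^k‖²_{G+2T}`. -/
theorem majorized_iPDC_decrease {E : Type*} [NormedAddCommGroup E] [InnerProductSpace ℝ E]
    [FiniteDimensional ℝ E]
    (g p q : E → ℝ) (g' : E → E) (G T : E →ₗ[ℝ] E)
    (hGsym : ∀ x y : E, ⟪G x, y⟫ = ⟪x, G y⟫) (hTsym : ∀ x y : E, ⟪T x, y⟫ = ⟪x, T y⟫)
    (hGpsd : ∀ x : E, 0 ≤ ⟪x, G x⟫)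
    (hmaj : ∀ x x' : E, g x ≤ g x' + ⟪g' x', x - x'⟫ + (1 / 2) * ⟪x - x', G (x - x')⟫)
    (hpconv : ConvexOn ℝ Set.univ p) (hqconv : ConvexOn ℝ Set.univ q)
    (xk xk1 ξ : E)
    (hξ : ∀ x : E, q xk + ⟪x - xk, ξ⟫ ≤ q x)
    (hmin : ∀ x : E,
      g xk + ⟪g' xk, xk1 - xk⟫ + (1 / 2) * ⟪xk1 - xk, G (xk1 - xk)⟫ + p xk1
          - (q xk + ⟪xk1 - xk, ξ⟫) + (1 / 2) * ⟪xk1 - xk, T (xk1 - xk)⟫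
        ≤ g xk + ⟪g' xk, x - xk⟫ + (1 / 2) * ⟪x - xk, G (x - xk)⟫ + p x
          - (q xk + ⟪x - xk, ξ⟫) + (1 / 2) * ⟪x - xk, T (x - xk)⟫) :
    g xk1 + p xk1 - q xk1
      ≤ g xk + p xk - q xk
        - (1 / 2) * (⟪xk1 - xk, G (xk1 - xk)⟫ + 2 * ⟪xk1 - xk, T (xk1 - xk)⟫) := by
  set d := xk1 - xk with hd
  set a := ⟪g' xk, d⟫ with ha
  set b := ⟪d, ξ⟫ with hb
  set s := ⟪d, G d⟫ + ⟪d, T d⟫ with hs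
  -- Step 1: from minimality along the segment, for every t ∈ (0,1]:
  have key : ∀ t : ℝ, 0 < t → t ≤ 1 →
      a + (1 - t / 2) * s + p xk1 - b ≤ p xk := by
    intro t ht ht1
    have hx := hmin (xk + (1 - t) • d)
    have hsub : (xk + (1 - t) • d) - xk = (1 - t) • d := by abel
    have hcomb : xk + (1 - t) • d = t • xk + (1 - t) • xk1 := by
      rw [hd]; module
    have hpt : p (xk + (1 - t) • d) ≤ t * p xk + (1 - t) * p xk1 := by
      rw [hcomb]
      exact hpconv.2 (Set.mem_univ xk) (Set.mem_univ xk1) ht.le (by linarith)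
        (by ring)
    rw [hsub] at hx
    have e1 : ⟪g' xk, (1 - t) • d⟫ = (1 - t) * a := by
      rw [real_inner_smul_right, ha]
    have e2 : ⟪(1 - t) • d, G ((1 - t) • d)⟫ = (1 - t) * ((1 - t) * ⟪d, G d⟫) := by
      rw [map_smul, real_inner_smul_left, real_inner_smul_right]
    have e3 : ⟪(1 - t) • d, T ((1 - t) • d)⟫ = (1 - t) * ((1 - t) * ⟪d, T d⟫) := by
      rw [map_smul, real_inner_smul_left, real_inner_smul_right]
    have e4 : ⟪(1 - t) • d, ξ⟫ = (1 - t) * b := by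
      rw [real_inner_smul_left, hb]
    rw [e1, e2, e3, e4] at hx
    have hmul : t * (a + (1 - t / 2) * s + p xk1 - b) ≤ t * p xk := by
      rw [hs]; nlinarith [hx, hpt]
    exact le_of_mul_le_mul_left hmul ht
  -- Step 2: pass to the limit t → 0⁺:
  have key0 : a + s + p xk1 - b ≤ p xk := by
    rcases le_or_gt s 0 with hsle | hspos
    · have := key 1 one_pos le_rfl
      linarith
    · have : ∀ ε : ℝ, 0 < ε → a + s + p xk1 - b ≤ p xk + ε := by
        intro ε hε
        set t := min 1 (2 * ε / s) with htdef
        have ht0 : 0 < t := lt_min one_pos (by positivity)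
        have ht1 : t ≤ 1 := min_le_left _ _
        have hts : t / 2 * s ≤ ε := by
          have h2 : t ≤ 2 * ε / s := min_le_right _ _
          have h3 : t * s ≤ 2 * ε := (le_div_iff₀ hspos).mp h2
          nlinarith [h3]
        have := key t ht0 ht1
        nlinarith
      exact le_of_forall_pos_le_add this
  -- Step 3: combine with majorization and the subgradient inequality at xk1:
  have h1 := hmaj xk1 xk
  have h2 := hξ xk1
  rw [← hd] at h1 h2
  rw [← ha] at h1
  rw [← hb] at h2
  rw [hs] at key0
  linarith
end

section
/- In the majorized iPDC algorithm with G + 2T ≻ 0 (positive definite) and inf_x θ(x) > −∞, the successive differences vanish: lim_{k→∞} ‖x^{k+1} − x^k‖ = 0. Moreover, with stopping tolerance η > 0, the algorithm terminates (i.e., ‖x^{k+1} − x^k‖ ≤ η occurs) within ⌈2(θ(x⁰) − θ*)/(λ_min η²)⌉ + 1 iterations, where λ_min > 0 is the smallest eigenvalue of G + 2T and θ* = inf θ. -/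
open scoped RealInnerProductSpace

/-- under the per-iteration decrease
`θ(x^{k+1}) ≤ θ(x^k) − (1/2)‖x^{k+1} − x^k‖²_{G+2T}` with `G + 2T ≻ 0`
(smallest eigenvalue `λ_min > 0`) and `inf θ ≥ θ*`, the successive differences
tend to zero, and for any tolerance `η > 0` the stopping criterion
`‖x^{k+1} − x^k‖ ≤ η` occurs within `⌈2(θ(x⁰) − θ*)/(λ_min η²)⌉ + 1` iterations. -/
theorem majorized_iPDC_termination {E : Type*} [NormedAddCommGroup E]
    [InnerProductSpace ℝ E] [FiniteDimensional ℝ E]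
    (θ : E → ℝ) (x : ℕ → E) (G T : E →ₗ[ℝ] E) (lammin θstar : ℝ)
    (hlam : 0 < lammin)
    (hpd : ∀ y : E, lammin * ‖y‖ ^ 2 ≤ ⟪y, G y⟫ + 2 * ⟪y, T y⟫)
    (hdec : ∀ k : ℕ, θ (x (k + 1)) ≤ θ (x k)
      - (1 / 2) * (⟪x (k + 1) - x k, G (x (k + 1) - x k)⟫
        + 2 * ⟪x (k + 1) - x k, T (x (k + 1) - x k)⟫))
    (hbound : ∀ y : E, θstar ≤ θ y) :
    Filter.Tendsto (fun k => ‖x (k + 1) - x k‖) Filter.atTop (nhds 0) ∧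
    ∀ η : ℝ, 0 < η →
      ∃ k ≤ Nat.ceil (2 * (θ (x 0) - θstar) / (lammin * η ^ 2)) + 1,
        ‖x (k + 1) - x k‖ ≤ η := by
  set d : ℕ → ℝ := fun k => ‖x (k + 1) - x k‖ with hd
  have hstep : ∀ k : ℕ, lammin / 2 * d k ^ 2 ≤ θ (x k) - θ (x (k + 1)) := by
    intro k
    have h1 := hpd (x (k + 1) - x k)
    have h2 := hdec k
    simp only [hd]
    linarith
  have hsum : ∀ n : ℕ, ∑ k ∈ Finset.range n, lammin / 2 * d k ^ 2
      ≤ θ (x 0) - θstar := by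
    intro n
    have htel : ∑ k ∈ Finset.range n, (θ (x k) - θ (x (k + 1)))
        = θ (x 0) - θ (x n) := Finset.sum_range_sub' (fun k => θ (x k)) n
    have := Finset.sum_le_sum (fun k _ => hstep k) (s := Finset.range n)
    have hb := hbound (x n)
    rw [htel] at this
    linarith
  have hnonneg : ∀ k : ℕ, 0 ≤ lammin / 2 * d k ^ 2 := by
    intro k
    positivity
  have hsummable : Summable (fun k => lammin / 2 * d k ^ 2) :=
    summable_of_sum_range_le hnonneg hsum
  have ht0 : Filter.Tendsto (fun k => lammin / 2 * d k ^ 2) Filter.atTop (nhds 0) :=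
    hsummable.tendsto_atTop_zero
  have ht1 : Filter.Tendsto (fun k => d k ^ 2) Filter.atTop (nhds 0) := by
    have hne : lammin / 2 ≠ 0 := by positivity
    have := ht0.const_mul (2 / lammin)
    simp only [mul_zero] at this
    convert this using 2 with k
    field_simp
  have ht2 : Filter.Tendsto (fun k => d k) Filter.atTop (nhds 0) := by
    have hc : Filter.Tendsto (fun k => Real.sqrt (d k ^ 2)) Filter.atTop (nhds 0) := by
      have := (Real.continuous_sqrt.tendsto 0).comp ht1
      rwa [Real.sqrt_zero] at this
    convert hc using 2 with k
    rw [Real.sqrt_sq (norm_nonneg _)]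
  refine ⟨ht2, ?_⟩
  intro η hη
  by_contra hcon
  push_neg at hcon
  set N : ℕ := Nat.ceil (2 * (θ (x 0) - θstar) / (lammin * η ^ 2)) + 1 with hN
  have hlarge : ∀ k ∈ Finset.range (N + 1), lammin / 2 * η ^ 2 ≤ lammin / 2 * d k ^ 2 := by
    intro k hk
    have hk' : k ≤ N := Nat.lt_succ_iff.mp (Finset.mem_range.mp hk)
    have := hcon k hk'
    have : η ^ 2 ≤ d k ^ 2 := by nlinarith [norm_nonneg (x (k + 1) - x k)]
    nlinarith
  have h3 : (N + 1 : ℝ) * (lammin / 2 * η ^ 2) ≤ θ (x 0) - θstar := by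
    have := Finset.sum_le_sum hlarge
    rw [Finset.sum_const, Finset.card_range] at this
    have h4 := hsum (N + 1)
    have h7 := le_trans this h4
    rw [nsmul_eq_mul, Nat.cast_add, Nat.cast_one] at h7
    exact h7
  have hq : 2 * (θ (x 0) - θstar) / (lammin * η ^ 2) ≤ (Nat.ceil (2 * (θ (x 0) - θstar) / (lammin * η ^ 2)) : ℝ) :=
    Nat.le_ceil _
  have hpos : 0 < lammin * η ^ 2 := by positivity
  have h5 : (N : ℝ) + 1 ≤ 2 * (θ (x 0) - θstar) / (lammin * η ^ 2) := by
    rw [le_div_iff₀ hpos]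
    nlinarith
  have h6 : (N : ℝ) ≥ (Nat.ceil (2 * (θ (x 0) - θstar) / (lammin * η ^ 2)) : ℝ) + 1 := by
    simp [hN]
  linarith
end
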